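/- Consider a 2-minded bidder: types are vectors θ' ∈ ℝ² of values for two bundles (the null assignment has value 0), and the allocation set is A = {(0,0), (1,0), (0,1)} ⊆ ℝ². Let θ ∈ ℝ² satisfy 0 < θ₁ < θ₂, and let F be the set of all implementable-with-payments rules f : ℝ² → A. Then H(θ, F) = {θ} ∪ {θ' ∈ ℝ² : θ'₁ < θ₁ and θ'₂ < θ₂ and θ'₂ − θ'₁ < θ₂ − θ₁}. In particular, a type that underbids on both bundles can fail to be harmless if it underbids relatively more on the preferred bundle, so preventing overbidding alone does not suffice for k = 2. -/
import Mathlib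


open Matrix BigOperators

/-- An allocation rule is implementable-with-payments if there is a payment rule
making truthful reporting optimal. -/
def Implementable (f : (Fin 2 → ℝ) → (Fin 2 → ℝ)) : Prop :=
  ∃ p : (Fin 2 → ℝ) → ℝ, ∀ θ θ' : Fin 2 → ℝ, f θ ⬝ᵥ θ - p θ ≥ f θ' ⬝ᵥ θ - p θ'

/-- Allocations for a 2-minded bidder: nothing, bundle 1, or bundle 2. -/
def allocSet : Set (Fin 2 → ℝ) := {![0, 0], ![1, 0], ![0, 1]}

lemma exists_bad_rule (θ θ' a a' : Fin 2 → ℝ) (hne : θ' ≠ θ)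
    (ha : a ∈ allocSet) (ha' : a' ∈ allocSet) (c : ℝ)
    (H1 : a' ⬝ᵥ θ' - c ≥ a ⬝ᵥ θ') (H2 : a ⬝ᵥ θ ≥ a' ⬝ᵥ θ - c)
    (H3 : a' ⬝ᵥ θ > a ⬝ᵥ θ) :
    ∃ f, (∀ x, f x ∈ allocSet) ∧ Implementable f ∧ f θ' ⬝ᵥ θ > f θ ⬝ᵥ θ := by
  classical
  refine ⟨fun x => if a' ⬝ᵥ x - c ≥ a ⬝ᵥ x ∧ x ≠ θ then a' else a, ?_, ?_, ?_⟩
  · intro x; dsimp only; split <;> assumption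
  · refine ⟨fun x => if a' ⬝ᵥ x - c ≥ a ⬝ᵥ x ∧ x ≠ θ then c else 0, ?_⟩
    intro x y
    dsimp only
    by_cases hx : a' ⬝ᵥ x - c ≥ a ⬝ᵥ x ∧ x ≠ θ <;>
      by_cases hy : a' ⬝ᵥ y - c ≥ a ⬝ᵥ y ∧ y ≠ θ
    · simp only [if_pos hx, if_pos hy]; exact le_refl _
    · simp only [if_pos hx, if_neg hy, sub_zero]; linarith [hx.1]
    · simp only [if_neg hx, if_pos hy, sub_zero]
      rw [not_and_or, not_not] at hx
      rcases hx with hx | hx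
      · push_neg at hx; linarith
      · rw [hx]; linarith
    · simp only [if_neg hx, if_neg hy, sub_zero, ge_iff_le, le_refl]
  · have hθ : ¬ (a' ⬝ᵥ θ - c ≥ a ⬝ᵥ θ ∧ θ ≠ θ) := by simp
    have hθ' : a' ⬝ᵥ θ' - c ≥ a ⬝ᵥ θ' ∧ θ' ≠ θ := ⟨H1, hne⟩
    dsimp only
    simp only [if_neg hθ, if_pos hθ']
    exact H3

/-- The `k = 2` combinatorial auction example: for a true type `θ` with
`0 < θ₁ < θ₂`, the harmless set of all implementable-with-payments rules into
`allocSet` is `θ` together with the types that underbid on both bundles while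
underbidding relatively less on the preferred bundle. -/
theorem harmless_two_minded (θ : Fin 2 → ℝ) (h0 : 0 < θ 0) (h01 : θ 0 < θ 1) :
    {θ' : Fin 2 → ℝ | ∀ f : (Fin 2 → ℝ) → (Fin 2 → ℝ),
        (∀ x, f x ∈ allocSet) → Implementable f → f θ ⬝ᵥ θ ≥ f θ' ⬝ᵥ θ} =
    {θ} ∪ {θ' : Fin 2 → ℝ |
        θ' 0 < θ 0 ∧ θ' 1 < θ 1 ∧ θ' 1 - θ' 0 < θ 1 - θ 0} := by
  have hd0 : ∀ x : Fin 2 → ℝ, (![0, 0] : Fin 2 → ℝ) ⬝ᵥ x = 0 := by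
    intro x; simp [dotProduct, Fin.sum_univ_two]
  have hd1 : ∀ x : Fin 2 → ℝ, (![1, 0] : Fin 2 → ℝ) ⬝ᵥ x = x 0 := by
    intro x; simp [dotProduct, Fin.sum_univ_two]
  have hd2 : ∀ x : Fin 2 → ℝ, (![0, 1] : Fin 2 → ℝ) ⬝ᵥ x = x 1 := by
    intro x; simp [dotProduct, Fin.sum_univ_two]
  have h00 : (![0, 0] : Fin 2 → ℝ) ∈ allocSet := by simp [allocSet]
  have h10 : (![1, 0] : Fin 2 → ℝ) ∈ allocSet := by simp [allocSet]
  have h01' : (![0, 1] : Fin 2 → ℝ) ∈ allocSet := by simp [allocSet]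
  ext θ'
  simp only [Set.mem_setOf_eq, Set.mem_union, Set.mem_singleton_iff]
  constructor
  · intro hH
    by_contra hcon
    push_neg at hcon
    obtain ⟨hne, hcon⟩ := hcon
    have key : ∃ (a a' : Fin 2 → ℝ) (c : ℝ), a ∈ allocSet ∧ a' ∈ allocSet ∧
        (a' ⬝ᵥ θ' - c ≥ a ⬝ᵥ θ') ∧ (a ⬝ᵥ θ ≥ a' ⬝ᵥ θ - c) ∧ (a' ⬝ᵥ θ > a ⬝ᵥ θ) := by
      by_cases hA : θ' 0 < θ 0
      · by_cases hB : θ' 1 < θ 1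
        · have hC : θ 1 - θ 0 ≤ θ' 1 - θ' 0 := by
            exact hcon hA hB
          refine ⟨![1, 0], ![0, 1], θ' 1 - θ' 0, h10, h01', ?_, ?_, ?_⟩ <;>
            simp only [hd1, hd2] <;> linarith
        · push_neg at hB
          refine ⟨![0, 0], ![0, 1], θ' 1, h00, h01', ?_, ?_, ?_⟩ <;>
            simp only [hd0, hd2] <;> linarith
      · push_neg at hA
        refine ⟨![0, 0], ![1, 0], θ' 0, h00, h10, ?_, ?_, ?_⟩ <;>
          simp only [hd0, hd1] <;> linarith
    obtain ⟨a, a', c, ha, ha', H1, H2, H3⟩ := key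
    obtain ⟨f, hf1, hf2, hf3⟩ := exists_bad_rule θ θ' a a' hne ha ha' c H1 H2 H3
    exact absurd (hH f hf1 hf2) (by linarith)
  · rintro (rfl | ⟨hA, hB, hC⟩)
    · intro f _ _; exact le_refl _
    intro f hf ⟨p, hp⟩
    have w1 := hp θ θ'
    have w2 := hp θ' θ
    have ha := hf θ
    have hb := hf θ'
    simp only [allocSet, Set.mem_insert_iff, Set.mem_singleton_iff] at ha hb
    rcases ha with ha | ha | ha <;> rcases hb with hb | hb | hb <;>
      rw [ha, hb] at w1 w2 ⊢ <;>
      simp only [hd0, hd1, hd2] at w1 w2 ⊢ <;> linarith
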